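/- Let Z be a countable set of functions ℕ → {0,1}, enumerated as z_0, z_1, …, and let H be a class with closure(H) ⊆ Z. Define the learner L on a finite sample S and query x by: let i₀ be the least i < |S| such that S is consistent with z_i (or i₀ = |S| if none exists), and output z_{i₀}(x). Then for every H-realizable infinite sequence R = (x_t, y_t)_{t=0}^∞, the learner L makes only finitely many mistakes on R: there exists m such that for all n > m, L((x_t,y_t)_{t=0}^n, x_{n+1}) = y_{n+1}. -/

import Mathlib

/-- The least-consistent-index learner over an enumeration `z`: on sample `S` and query `x`,
output `z i₀ x` where `i₀` is the least `i < |S|` with `z i` consistent with `S`, or `|S|`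
if there is none. -/
noncomputable def leastConsistentLearner (z : ℕ → ℕ → Bool)
    (S : List (ℕ × Bool)) (x : ℕ) : Bool :=
  z (sInf ({i : ℕ | i < S.length ∧ ∀ p ∈ S, z i p.1 = p.2} ∪ {S.length})) x

/-- If `closure H ⊆ {z_0, z_1, …}`, then the least-consistent-index learner makes only
finitely many mistakes on every `H`-realizable infinite sequence. -/
theorem least_consistent_learner_learns (H : Set (ℕ → Bool)) (z : ℕ → ℕ → Bool)
    (hZ : closure H ⊆ Set.range z) (x : ℕ → ℕ) (y : ℕ → Bool)
    (hreal : ∀ n : ℕ, ∃ g ∈ H, ∀ t ≤ n, g (x t) = y t) :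
    ∃ m : ℕ, ∀ n > m,
      leastConsistentLearner z (List.ofFn fun t : Fin (n + 1) => (x t, y t)) (x (n + 1)) =
        y (n + 1) := by
  -- Step 1: find f ∈ closure H consistent with the whole sequence.
  choose g hgH hgc using hreal
  obtain ⟨f, hf⟩ := exists_clusterPt_of_compactSpace (Filter.map g Filter.atTop)
  have hfH : f ∈ closure H := by
    rw [mem_closure_iff_clusterPt]
    exact hf.mono (Filter.le_principal_iff.mpr
      (Filter.mem_map.mpr (Filter.Eventually.of_forall hgH)))
  have hcons : ∀ t, f (x t) = y t := by
    intro t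
    have hU : (fun h : ℕ → Bool => h (x t)) ⁻¹' ({f (x t)} : Set Bool) ∈ nhds f :=
      ((continuous_apply (A := fun _ : ℕ => Bool) (x t)).isOpen_preimage ({f (x t)} : Set Bool)
        (isOpen_discrete _)).mem_nhds rfl
    have hV : {h : ℕ → Bool | h (x t) = y t} ∈ Filter.map g Filter.atTop := by
      rw [Filter.mem_map]
      filter_upwards [Filter.eventually_ge_atTop t] with n hn
      exact hgc n t hn
    haveI : (nhds f ⊓ Filter.map g Filter.atTop).NeBot := hf
    obtain ⟨h, hh1, hh2⟩ := Filter.nonempty_of_mem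
      (Filter.inter_mem (Filter.mem_inf_of_left hU) (Filter.mem_inf_of_right hV))
    have hh1' : h (x t) = f (x t) := hh1
    exact hh1' ▸ hh2
  obtain ⟨j0, hj0⟩ := hZ hfH
  -- least all-consistent index
  set C : Set ℕ := {i | ∀ t, z i (x t) = y t} with hC
  have hCne : C.Nonempty := ⟨j0, fun t => by rw [hj0]; exact hcons t⟩
  set j := sInf C with hjdef
  have hjC : j ∈ C := Nat.sInf_mem hCne
  have hbad : ∀ i, ∃ t, i < j → z i (x t) ≠ y t := by
    intro i
    by_cases hi : i < j
    · have : i ∉ C := Nat.notMem_of_lt_sInf hi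
      simp only [hC, Set.mem_setOf_eq, not_forall] at this
      obtain ⟨t, ht⟩ := this
      exact ⟨t, fun _ => ht⟩
    · exact ⟨0, fun h => absurd h hi⟩
  choose T hT using hbad
  refine ⟨max j ((Finset.range j).sup T), fun n hn => ?_⟩
  have hjn : j ≤ n := le_of_lt (lt_of_le_of_lt (le_max_left _ _) hn)
  have hTn : ∀ i, i < j → T i ≤ n := fun i hi =>
    le_of_lt (lt_of_le_of_lt (le_trans (Finset.le_sup (Finset.mem_range.mpr hi))
      (le_max_right _ _)) hn)
  unfold leastConsistentLearner
  set L := List.ofFn fun t : Fin (n + 1) => (x t, y t) with hL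
  have hLlen : L.length = n + 1 := by simp [hL]
  have hmemL : ∀ p ∈ L, ∃ t : ℕ, t ≤ n ∧ p = (x t, y t) := by
    intro p hp
    rw [hL, List.mem_ofFn] at hp
    obtain ⟨t, ht⟩ := hp
    exact ⟨t, Nat.lt_succ_iff.mp t.isLt, ht.symm⟩
  have hmemL' : ∀ t : ℕ, t ≤ n → (x t, y t) ∈ L := by
    intro t ht
    rw [hL, List.mem_ofFn]
    exact ⟨⟨t, Nat.lt_succ_of_le ht⟩, rfl⟩
  set A : Set ℕ := {i : ℕ | i < L.length ∧ ∀ p ∈ L, z i p.1 = p.2} ∪ {L.length} with hA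
  have hjA : j ∈ A := by
    left
    refine ⟨hLlen ▸ Nat.lt_succ_of_le hjn, fun p hp => ?_⟩
    obtain ⟨t, _, rfl⟩ := hmemL p hp
    exact hjC t
  have hle : sInf A ≤ j := Nat.sInf_le hjA
  have hmem : sInf A ∈ A := Nat.sInf_mem ⟨j, hjA⟩
  have heq : sInf A = j := by
    rcases hmem with hmem | hmem
    · by_contra hne
      have hlt : sInf A < j := lt_of_le_of_ne hle hne
      exact hT (sInf A) hlt
        (hmem.2 (x (T (sInf A)), y (T (sInf A))) (hmemL' _ (hTn _ hlt)))
    · exfalso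
      have : sInf A = n + 1 := by simpa [hLlen] using hmem
      omega
  rw [heq]
  exact hjC (n + 1)
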